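/- If A is a nonempty nearly convex subset of a Euclidean space, then the relative interior (intrinsic interior) of A is nonempty and convex. -/

import Mathlib

open Set

variable {X : Type*} [NormedAddCommGroup X] [InnerProductSpace ℝ X] [FiniteDimensional ℝ X]

def NearlyEqual (A B : Set X) : Prop :=
  closure A = closure B ∧ intrinsicInterior ℝ A = intrinsicInterior ℝ B

def NearlyConvex (A : Set X) : Prop :=
  ∃ C : Set X, Convex ℝ C ∧ C ⊆ A ∧ A ⊆ closure C

lemma interior_closure_subset_of_convex' {V : Type*} [NormedAddCommGroup V] [NormedSpace ℝ V]
    {s : Set V} (hs : Convex ℝ s) (h : (interior s).Nonempty) :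
    interior (closure s) ⊆ interior s := by
  obtain ⟨y, hy⟩ := h
  intro x hx
  obtain ⟨ε, hε, hball⟩ := Metric.isOpen_iff.1 isOpen_interior x hx
  set t : ℝ := ε / (2 * (‖x - y‖ + 1)) with ht
  have htpos : 0 < t := by positivity
  have hte : t * (2 * (‖x - y‖ + 1)) = ε := by
    rw [ht]; field_simp
  have hz : x + t • (x - y) ∈ closure s := by
    apply interior_subset
    apply hball
    rw [Metric.mem_ball, dist_eq_norm, add_sub_cancel_left, norm_smul, Real.norm_eq_abs,
      abs_of_pos htpos]
    nlinarith [norm_nonneg (x - y)]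
  have key := hs.combo_closure_interior_mem_interior hz hy
    (a := 1 / (1 + t)) (b := t / (1 + t)) (by positivity) (by positivity)
    (by field_simp)
  have heq : (1 / (1 + t)) • (x + t • (x - y)) + (t / (1 + t)) • y = x := by
    have h1 : (1 : ℝ) + t ≠ 0 := by positivity
    match_scalars <;> field_simp <;> ring
  rwa [heq] at key

lemma intrinsicInterior_eq_interior_of_span_top' {V : Type*} [NormedAddCommGroup V]
    [NormedSpace ℝ V] {s : Set V} (h : affineSpan ℝ s = ⊤) :
    intrinsicInterior ℝ s = interior s := by
  refine subset_antisymm ?_ interior_subset_intrinsicInterior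
  have hopen : IsOpen ((affineSpan ℝ s : Set V)) := by
    rw [h]; exact isOpen_univ
  have hmap : IsOpenMap ((↑) : affineSpan ℝ s → V) := hopen.isOpenMap_subtype_val
  rintro x ⟨y, hy, rfl⟩
  have h2 := hmap.image_interior_subset _ (mem_image_of_mem _ hy)
  refine interior_mono ?_ h2
  rw [Set.image_preimage_eq_inter_range]
  exact inter_subset_left


theorem relint_nonempty_convex_of_nearlyConvex (A : Set X) (h : NearlyConvex A)
    (hne : A.Nonempty) :
    (intrinsicInterior ℝ A).Nonempty ∧ Convex ℝ (intrinsicInterior ℝ A) := by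
  obtain ⟨C, hC, hCA, hAC⟩ := h

  have hCne : C.Nonempty := by
    rcases hne with ⟨a, ha⟩
    rcases C.eq_empty_or_nonempty with rfl | h
    · simp only [closure_empty] at hAC
      exact absurd (hAC ha) (notMem_empty a)
    · exact h
  obtain ⟨c, hc⟩ := hCne
  set s : AffineSubspace ℝ X := affineSpan ℝ A with hs
  have hcs : c ∈ s := subset_affineSpan ℝ A (hCA hc)
  haveI : Nonempty s := ⟨⟨c, hcs⟩⟩
  let e : s ≃ᵃⁱ[ℝ] s.direction := AffineIsometryEquiv.constVSub ℝ (⟨c, hcs⟩ : s)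
  let φ : s.direction →ᵃⁱ[ℝ] X := s.subtypeₐᵢ.comp e.symm.toAffineIsometry
  have hφcoe : ⇑φ = (Subtype.val : s → X) ∘ ⇑e.symm := rfl
  have hφinj : Function.Injective φ := by
    rw [hφcoe]; exact Subtype.val_injective.comp e.symm.injective
  have hφrange : Set.range φ = (s : Set X) := by
    rw [hφcoe, Set.range_comp, e.symm.surjective.range_eq, image_univ, Subtype.range_coe]
  have hAs : A ⊆ (s : Set X) := subset_affineSpan ℝ A
  have hCs : C ⊆ (s : Set X) := hCA.trans hAs
  set Abar := φ ⁻¹' A with hAbar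
  set Cbar := φ ⁻¹' C with hCbar
  have himA : φ '' Abar = A := by
    rw [hAbar, image_preimage_eq_inter_range, hφrange, inter_eq_left.2 hAs]
  have himC : φ '' Cbar = C := by
    rw [hCbar, image_preimage_eq_inter_range, hφrange, inter_eq_left.2 hCs]
  have hCbarConv : Convex ℝ Cbar := by
    have := hC.affine_preimage φ.toAffineMap
    rwa [φ.coe_toAffineMap] at this
  have hCAbar : Cbar ⊆ Abar := preimage_mono hCA
  have hφcl : Topology.IsClosedEmbedding φ := φ.isometry.isClosedEmbedding
  have hACbar : Abar ⊆ closure Cbar := by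
    intro x hx
    have h1 : φ x ∈ closure C := hAC hx
    rw [← himC, hφcl.closure_image_eq] at h1
    obtain ⟨y, hy, hyx⟩ := h1
    rwa [← hφinj hyx]
  have hmapspan : (affineSpan ℝ Abar).map φ.toAffineMap = s := by
    rw [AffineSubspace.map_span, φ.coe_toAffineMap, himA]
  have hspanA : affineSpan ℝ Abar = ⊤ := by
    have hall : ∀ x : s.direction, x ∈ affineSpan ℝ Abar := by
      intro x
      have hxs : φ.toAffineMap x ∈ AffineSubspace.map φ.toAffineMap (affineSpan ℝ Abar) := by
        rw [hmapspan]
        show φ x ∈ (s : Set X)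
        rw [← hφrange]; exact mem_range_self x
      rw [AffineSubspace.mem_map] at hxs
      obtain ⟨y, hy, hyx⟩ := hxs
      have hyx' : y = x := hφinj hyx
      rwa [← hyx']
    exact AffineSubspace.ext fun x => ⟨fun _ => trivial, fun _ => hall x⟩
  have hspanC : affineSpan ℝ Cbar = ⊤ := by
    rw [eq_top_iff, ← hspanA, affineSpan_le]
    refine hACbar.trans (closure_minimal (subset_affineSpan ℝ Cbar) ?_)
    exact (affineSpan ℝ Cbar).closed_of_finiteDimensional
  have hintC : (interior Cbar).Nonempty :=
    hCbarConv.interior_nonempty_iff_affineSpan_eq_top.2 hspanC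
  have hintEq : interior Abar = interior Cbar := by
    refine subset_antisymm ?_ (interior_mono hCAbar)
    exact (interior_mono hACbar).trans
      (interior_closure_subset_of_convex' hCbarConv hintC)
  have hfinal : intrinsicInterior ℝ A = φ '' interior Abar := by
    calc intrinsicInterior ℝ A = intrinsicInterior ℝ (φ '' Abar) := by rw [himA]
      _ = φ '' intrinsicInterior ℝ Abar := φ.image_intrinsicInterior Abar
      _ = φ '' interior Abar := by rw [intrinsicInterior_eq_interior_of_span_top' hspanA]
  constructor
  · rw [hfinal, hintEq]
    exact hintC.image φ
  · rw [hfinal, hintEq]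
    have := (hCbarConv.interior).affine_image φ.toAffineMap
    rwa [φ.coe_toAffineMap] at this
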